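/- Consider the sticky hard sphere potential in dimension 1: V(x) = +∞ if |x| < 1, V(x) = -1 if |x| = 1, V(x) = 0 if |x| > 1. For every N ≥ 2, the configuration x_i = i (equally spaced points at distance 1) attains the minimum energy E_N = -2(N-1), and every configuration has E_N ≥ -2(N-1). -/
import Mathlib

open Finset

/-- The 1D sticky hard sphere potential. -/
noncomputable def stickyV (x : ℝ) : EReal :=
  if |x| < 1 then ⊤ else if |x| = 1 then -1 else 0

lemma stickyV_ne_bot (x : ℝ) : stickyV x ≠ ⊥ := by
  unfold stickyV
  split_ifs <;> simp [← EReal.coe_one, ← EReal.coe_neg]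

lemma ereal_coe_sum {α : Type*} (s : Finset α) (f : α → ℝ) :
    ((∑ x ∈ s, f x : ℝ) : EReal) = ∑ x ∈ s, ((f x : ℝ) : EReal) :=
  map_sum (⟨⟨Real.toEReal, EReal.coe_zero⟩, EReal.coe_add⟩ : ℝ →+ EReal) f s

lemma ereal_sum_ne_bot {α : Type*} (s : Finset α) (f : α → EReal)
    (h : ∀ a ∈ s, f a ≠ ⊥) : ∑ x ∈ s, f x ≠ ⊥ := by
  induction s using Finset.cons_induction with
  | empty => simp
  | cons a s ha ih =>
    rw [Finset.sum_cons]
    intro hc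
    rcases EReal.add_eq_bot_iff.1 hc with h1 | h1
    · exact h a (Finset.mem_cons_self a s) h1
    · exact ih (fun b hb => h b (Finset.mem_cons_of_mem hb)) h1

lemma ereal_sum_eq_top {α : Type*} [DecidableEq α] (s : Finset α) (f : α → EReal)
    (hb : ∀ a ∈ s, f a ≠ ⊥) {a : α} (ha : a ∈ s) (hfa : f a = ⊤) :
    ∑ x ∈ s, f x = ⊤ := by
  rw [← Finset.add_sum_erase s f ha, hfa,
    EReal.top_add_of_ne_bot (ereal_sum_ne_bot _ _
      (fun b hb' => hb b (Finset.mem_of_mem_erase hb')))]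

lemma aux_card (N : ℕ) (X : Fin N → ℝ) (hinj : Function.Injective X) (c : ℝ)
    (i₀ : Fin N) (h0 : ∀ i j : Fin N, X j = X i + c → j ≠ i₀) :
    ∑ i : Fin N, (univ.filter (fun j => X j = X i + c)).card ≤ N - 1 := by
  have hdisj : ∀ i ∈ (univ : Finset (Fin N)), ∀ i' ∈ (univ : Finset (Fin N)), i ≠ i' →
      Disjoint (univ.filter (fun j => X j = X i + c))
        (univ.filter (fun j => X j = X i' + c)) := by
    intro i _ i' _ hne
    rw [Finset.disjoint_left]
    intro j hj hj'
    simp only [Finset.mem_filter] at hj hj'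
    exact hne (hinj (by linarith [hj.2, hj'.2]))
  rw [← Finset.card_biUnion hdisj]
  have hsub : (univ.biUnion (fun i => univ.filter (fun j => X j = X i + c))) ⊆
      univ.erase i₀ := by
    intro j hj
    rw [Finset.mem_biUnion] at hj
    obtain ⟨i, _, hji⟩ := hj
    rw [Finset.mem_filter] at hji
    exact Finset.mem_erase.2 ⟨h0 i j hji.2, Finset.mem_univ j⟩
  calc _ ≤ (univ.erase i₀).card := Finset.card_le_card hsub
    _ = N - 1 := by rw [Finset.card_erase_of_mem (Finset.mem_univ i₀)]; simp

lemma real_lower (N : ℕ) (hN : 1 ≤ N) (X : Fin N → ℝ)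
    (h : ∀ i j : Fin N, i ≠ j → 1 ≤ |X i - X j|) :
    -(2 * ((N : ℝ) - 1)) ≤
      ∑ i : Fin N, ∑ j ∈ Finset.univ.erase i,
        (if |X i - X j| = 1 then (-1 : ℝ) else 0) := by
  haveI : Nonempty (Fin N) := ⟨⟨0, hN⟩⟩
  have hinj : Function.Injective X := by
    intro i j hij
    by_contra hne
    have := h i j hne
    rw [hij, sub_self, abs_zero] at this
    linarith
  set A : Fin N → Finset (Fin N) := fun i => univ.filter (fun j => X j = X i + 1) with hA
  set B : Fin N → Finset (Fin N) := fun i => univ.filter (fun j => X j = X i + (-1)) with hB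
  -- inner sum bound
  have key : ∀ i : Fin N, ∑ j ∈ Finset.univ.erase i,
      (if |X i - X j| = 1 then (-1 : ℝ) else 0)
      = -((((univ.erase i).filter (fun j => |X i - X j| = 1)).card : ℝ)) := by
    intro i
    rw [Finset.sum_ite, Finset.sum_const, Finset.sum_const_zero]
    simp
  have hcard : ∀ i : Fin N,
      (((univ.erase i).filter (fun j => |X i - X j| = 1)).card : ℕ)
        ≤ (A i).card + (B i).card := by
    intro i
    have hsub : ((univ.erase i).filter (fun j => |X i - X j| = 1)) ⊆ A i ∪ B i := by
      intro j hj
      rw [Finset.mem_filter] at hj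
      rcases abs_eq (by norm_num : (0:ℝ) ≤ 1) |>.1 hj.2 with h1 | h1
      · exact Finset.mem_union_right _ (by simp [hB]; linarith)
      · exact Finset.mem_union_left _ (by simp [hA]; linarith)
    calc _ ≤ (A i ∪ B i).card := Finset.card_le_card hsub
      _ ≤ _ := Finset.card_union_le _ _
  -- min and max
  obtain ⟨i₀, _, hmin⟩ := Finset.exists_min_image univ X ⟨Classical.arbitrary _, Finset.mem_univ _⟩
  obtain ⟨i₁, _, hmax⟩ := Finset.exists_max_image univ X ⟨Classical.arbitrary _, Finset.mem_univ _⟩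
  have hAcard : ∑ i : Fin N, (A i).card ≤ N - 1 := by
    apply aux_card N X hinj 1 i₀
    intro i j hji
    intro hji0
    have := hmin i (Finset.mem_univ i)
    rw [hji0] at hji
    linarith
  have hBcard : ∑ i : Fin N, (B i).card ≤ N - 1 := by
    apply aux_card N X hinj (-1) i₁
    intro i j hji
    intro hji0
    have := hmax i (Finset.mem_univ i)
    rw [hji0] at hji
    linarith
  have htot : ∑ i : Fin N, ((A i).card + (B i).card) ≤ 2 * (N - 1) := by
    rw [Finset.sum_add_distrib]; omega
  calc -(2 * ((N : ℝ) - 1))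
      ≤ -((∑ i : Fin N, ((A i).card + (B i).card) : ℕ) : ℝ) := by
        rw [neg_le_neg_iff]
        have h1 : ((∑ i : Fin N, ((A i).card + (B i).card) : ℕ) : ℝ)
            ≤ ((2 * (N - 1) : ℕ) : ℝ) := Nat.cast_le.2 htot
        have h2 : ((2 * (N - 1) : ℕ) : ℝ) = 2 * ((N:ℝ) - 1) := by
          rw [Nat.cast_mul, Nat.cast_sub hN]; norm_num
        linarith
    _ = ∑ i : Fin N, -((((A i).card + (B i).card : ℕ)) : ℝ) := by
        rw [Nat.cast_sum, ← Finset.sum_neg_distrib]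
    _ ≤ ∑ i : Fin N, ∑ j ∈ Finset.univ.erase i,
        (if |X i - X j| = 1 then (-1 : ℝ) else 0) := by
        apply Finset.sum_le_sum
        intro i _
        rw [key i]
        exact neg_le_neg (Nat.cast_le.2 (hcard i))

/-- In 1D, equally spaced points at distance 1 minimize the sticky hard
sphere energy, with minimal energy `-2(N-1)`. -/
theorem sticky_1d_minimizer (N : ℕ) (hN : 2 ≤ N) :
    (∑ i : Fin N, ∑ j ∈ Finset.univ.erase i, stickyV ((i : ℝ) - (j : ℝ)))
      = ((-(2 * ((N : ℝ) - 1)) : ℝ) : EReal) ∧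
    ∀ X : Fin N → ℝ,
      ((-(2 * ((N : ℝ) - 1)) : ℝ) : EReal) ≤
        ∑ i : Fin N, ∑ j ∈ Finset.univ.erase i, stickyV (X i - X j) := by
  have hN1 : 1 ≤ N := le_trans (by norm_num) hN
  have hsticky_coe : ∀ x : ℝ, 1 ≤ |x| →
      stickyV x = (((if |x| = 1 then (-1 : ℝ) else 0) : ℝ) : EReal) := by
    intro x hx
    unfold stickyV
    rw [if_neg (not_lt.2 hx)]
    split_ifs <;> simp [← EReal.coe_one, ← EReal.coe_neg]
  constructor
  · have hsep2 : ∀ i j : Fin N, i ≠ j → 1 ≤ |(i : ℝ) - (j : ℝ)| := by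
      intro i j hij
      have hz : (1:ℤ) ≤ |((i:ℕ):ℤ) - ((j:ℕ):ℤ)| := by
        apply Int.one_le_abs
        simp only [sub_ne_zero, Ne, Int.natCast_inj]
        exact fun h => hij (Fin.ext h)
      have h2 : (1:ℝ) ≤ |((i:ℕ):ℝ) - ((j:ℕ):ℝ)| := by exact_mod_cast hz
      exact_mod_cast h2
    have hcoe : (∑ i : Fin N, ∑ j ∈ Finset.univ.erase i, stickyV ((i:ℝ) - (j:ℝ)))
        = ((∑ i : Fin N, ∑ j ∈ Finset.univ.erase i,
            (if |(i:ℝ) - (j:ℝ)| = 1 then (-1:ℝ) else 0) : ℝ) : EReal) := by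
      rw [ereal_coe_sum]
      refine Finset.sum_congr rfl fun i _ => ?_
      rw [ereal_coe_sum]
      refine Finset.sum_congr rfl fun j hj => ?_
      exact hsticky_coe _ (hsep2 i j (Finset.ne_of_mem_erase hj).symm)
    rw [hcoe]
    congr 1
    have key : ∀ i : Fin N, (∑ j ∈ univ.erase i, if |(i:ℝ)-(j:ℝ)| = 1 then (-1:ℝ) else 0)
        = -((((univ.erase i).filter (fun j : Fin N => |(i:ℝ)-(j:ℝ)| = 1)).card : ℝ)) := by
      intro i
      rw [Finset.sum_ite, Finset.sum_const, Finset.sum_const_zero]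
      simp
    have hcard : ∀ i : Fin N, (((univ.erase i).filter (fun j : Fin N => |(i:ℝ)-(j:ℝ)| = 1)).card : ℕ)
        = (if (i:ℕ)+1 < N then 1 else 0) + (if 1 ≤ (i:ℕ) then 1 else 0) := by
      intro i
      have hunion : ((univ.erase i).filter (fun j : Fin N => |(i:ℝ)-(j:ℝ)| = 1))
          = (univ.filter (fun j : Fin N => (j:ℕ) = (i:ℕ)+1))
            ∪ (univ.filter (fun j : Fin N => (j:ℕ)+1 = (i:ℕ))) := by
        ext j
        simp only [Finset.mem_filter, Finset.mem_erase, Finset.mem_union, Finset.mem_univ,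
          true_and, and_true]
        constructor
        · rintro ⟨hji, habs⟩
          rcases (abs_eq (by norm_num : (0:ℝ) ≤ 1)).1 habs with h1 | h1
          · right
            have h2 : ((j:ℕ):ℝ) + 1 = ((i:ℕ):ℝ) := by linarith
            exact_mod_cast h2
          · left
            have h2 : ((j:ℕ):ℝ) = ((i:ℕ):ℝ) + 1 := by linarith
            exact_mod_cast h2
        · rintro (h1 | h1)
          · have hji : (j:ℕ) ≠ (i:ℕ) := by omega
            refine ⟨fun hh => hji (congrArg Fin.val hh), ?_⟩
            have hr : ((j:ℕ):ℝ) = ((i:ℕ):ℝ) + 1 := by exact_mod_cast h1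
            rw [abs_eq (by norm_num : (0:ℝ) ≤ 1)]
            right
            push_cast at hr ⊢
            linarith
          · have hji : (j:ℕ) ≠ (i:ℕ) := by omega
            refine ⟨fun hh => hji (congrArg Fin.val hh), ?_⟩
            have hr : ((j:ℕ):ℝ) + 1 = ((i:ℕ):ℝ) := by exact_mod_cast h1
            rw [abs_eq (by norm_num : (0:ℝ) ≤ 1)]
            left
            push_cast at hr ⊢
            linarith
      have hdisj : Disjoint (univ.filter (fun j : Fin N => (j:ℕ) = (i:ℕ)+1))
          (univ.filter (fun j : Fin N => (j:ℕ)+1 = (i:ℕ))) := by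
        rw [Finset.disjoint_left]
        intro j hj hj'
        simp only [Finset.mem_filter] at hj hj'
        omega
      have cardA : (univ.filter (fun j : Fin N => (j:ℕ) = (i:ℕ)+1)).card
          = if (i:ℕ)+1 < N then 1 else 0 := by
        by_cases h : (i:ℕ)+1 < N
        · rw [if_pos h,
            show (univ.filter (fun j : Fin N => (j:ℕ) = (i:ℕ)+1)) = {⟨(i:ℕ)+1, h⟩} by
              ext j; simp [Fin.ext_iff]]
          exact Finset.card_singleton _
        · rw [if_neg h, Finset.card_eq_zero, Finset.filter_eq_empty_iff]
          intro j _
          have := j.isLt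
          omega
      have cardB : (univ.filter (fun j : Fin N => (j:ℕ)+1 = (i:ℕ))).card
          = if 1 ≤ (i:ℕ) then 1 else 0 := by
        by_cases h : 1 ≤ (i:ℕ)
        · rw [if_pos h,
            show (univ.filter (fun j : Fin N => (j:ℕ)+1 = (i:ℕ)))
                = {⟨(i:ℕ)-1, by have := i.isLt; omega⟩} by
              ext j; simp [Fin.ext_iff]; omega]
          exact Finset.card_singleton _
        · rw [if_neg h, Finset.card_eq_zero, Finset.filter_eq_empty_iff]
          intro j _
          omega
      rw [hunion, Finset.card_union_of_disjoint hdisj, cardA, cardB]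
    have hsum : ∑ i : Fin N,
        (((if (i:ℕ)+1 < N then 1 else 0) + (if 1 ≤ (i:ℕ) then 1 else 0)) : ℕ)
        = (N-1) + (N-1) := by
      rw [Finset.sum_add_distrib]
      congr 1
      · rw [← Finset.card_filter,
          show (univ.filter (fun i : Fin N => (i:ℕ)+1 < N)) = univ.erase ⟨N-1, by omega⟩ by
            ext i; simp [Fin.ext_iff]; have := i.isLt; omega,
          Finset.card_erase_of_mem (Finset.mem_univ _), Finset.card_univ, Fintype.card_fin]
      · rw [← Finset.card_filter,
          show (univ.filter (fun i : Fin N => 1 ≤ (i:ℕ))) = univ.erase ⟨0, by omega⟩ by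
            ext i; simp [Fin.ext_iff]; omega,
          Finset.card_erase_of_mem (Finset.mem_univ _), Finset.card_univ, Fintype.card_fin]
    calc ∑ i : Fin N, ∑ j ∈ Finset.univ.erase i,
          (if |(i:ℝ) - (j:ℝ)| = 1 then (-1:ℝ) else 0)
        = ∑ i : Fin N,
            -((((if (i:ℕ)+1 < N then 1 else 0) + (if 1 ≤ (i:ℕ) then 1 else 0) : ℕ)) : ℝ) := by
          refine Finset.sum_congr rfl fun i _ => ?_
          rw [key i, hcard i]
      _ = -(((∑ i : Fin N,
            ((if (i:ℕ)+1 < N then 1 else 0) + (if 1 ≤ (i:ℕ) then 1 else 0)) : ℕ)) : ℝ) := by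
          rw [Nat.cast_sum, ← Finset.sum_neg_distrib]
      _ = -(2 * ((N:ℝ) - 1)) := by
          rw [hsum]
          have : (((N-1)+(N-1) : ℕ) : ℝ) = 2 * ((N:ℝ) - 1) := by
            push_cast [Nat.cast_sub hN1]
            ring
          rw [this]
  · intro X
    by_cases hsep : ∀ i j : Fin N, i ≠ j → 1 ≤ |X i - X j|
    · have : (∑ i : Fin N, ∑ j ∈ Finset.univ.erase i, stickyV (X i - X j))
          = ((∑ i : Fin N, ∑ j ∈ Finset.univ.erase i,
              (if |X i - X j| = 1 then (-1 : ℝ) else 0) : ℝ) : EReal) := by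
        rw [ereal_coe_sum]
        apply Finset.sum_congr rfl
        intro i _
        rw [ereal_coe_sum]
        apply Finset.sum_congr rfl
        intro j hj
        exact hsticky_coe _ (hsep i j (Finset.ne_of_mem_erase hj).symm)
      rw [this]
      exact EReal.coe_le_coe_iff.2 (real_lower N hN1 X hsep)
    · push_neg at hsep
      obtain ⟨i, j, hij, hlt⟩ := hsep
      have htop : (∑ i : Fin N, ∑ j ∈ Finset.univ.erase i, stickyV (X i - X j)) = ⊤ := by
        apply ereal_sum_eq_top _ _ (fun a _ => ereal_sum_ne_bot _ _
          (fun b _ => stickyV_ne_bot _)) (Finset.mem_univ i)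
        apply ereal_sum_eq_top _ _ (fun b _ => stickyV_ne_bot _)
          (Finset.mem_erase.2 ⟨hij.symm, Finset.mem_univ j⟩)
        unfold stickyV
        rw [if_pos hlt]
      rw [htop]
      exact le_top
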